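/- Every tree H with at least one edge admits a cyclically-interval t-coloring for every integer t with Δ(H) ≤ t ≤ M(H); in particular [Δ(H), M(H)] ⊆ Θ(H). -/

import Mathlib

open SimpleGraph

/-- `Q` is a `t`-cyclic interval. -/
def IsCyclicInterval (t : ℕ) (Q : Set ℕ) : Prop :=
  ∃ i₁ ∈ Set.Icc 1 t, ∃ i₂ ∈ Set.Icc 1 t,
    Q = Set.Icc (min i₁ i₂) (max i₁ i₂) ∨
    Q = Set.Icc 1 t \ (Set.Icc (min i₁ i₂) (max i₁ i₂) \ {i₁, i₂})

/-- A proper edge `t`-coloring: colors in `[1,t]`, adjacent edges differ, all colors used. -/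
def IsProperEdgeColoring {V : Type*} (G : SimpleGraph V) (t : ℕ) (φ : Sym2 V → ℕ) : Prop :=
  (∀ e ∈ G.edgeSet, φ e ∈ Set.Icc 1 t) ∧
  (∀ e₁ ∈ G.edgeSet, ∀ e₂ ∈ G.edgeSet, e₁ ≠ e₂ → (∃ x, x ∈ e₁ ∧ x ∈ e₂) → φ e₁ ≠ φ e₂) ∧
  (∀ c ∈ Set.Icc 1 t, ∃ e ∈ G.edgeSet, φ e = c)

/-- A cyclically-interval `t`-coloring. -/
def IsCyclicIntervalColoring {V : Type*} (G : SimpleGraph V) (t : ℕ) (φ : Sym2 V → ℕ) : Prop :=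
  IsProperEdgeColoring G t φ ∧
  ∀ x : V, (G.incidenceSet x).Nonempty → IsCyclicInterval t (φ '' G.incidenceSet x)

/-- An interval `t`-coloring. -/
def IsIntervalColoring {V : Type*} (G : SimpleGraph V) (t : ℕ) (φ : Sym2 V → ℕ) : Prop :=
  IsProperEdgeColoring G t φ ∧
  ∀ x : V, (G.incidenceSet x).Nonempty → ∃ a b, φ '' G.incidenceSet x = Set.Icc a b

/-- `TP(u,v)` along a path `p`. -/
def pathTP {V : Type*} (G : SimpleGraph V) {u v : V} (p : G.Walk u v) : Set (Sym2 V) :=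
  if p.length ≤ 1 then {e | e ∈ p.edges}
  else ⋃ x ∈ {w | w ∈ p.support ∧ w ≠ u ∧ w ≠ v}, G.incidenceSet x

/-- `M(H)`: maximum of `|TP(b_i,b_j)|` over pairs of vertices. -/
noncomputable def treeM {V : Type*} (G : SimpleGraph V) : ℕ :=
  sSup {n | ∃ (u v : V) (p : G.Walk u v), p.IsPath ∧ (pathTP G p).ncard = n}

noncomputable def Wcyc {V : Type*} (G : SimpleGraph V) : ℕ :=
  sSup {t | ∃ φ, IsCyclicIntervalColoring G t φ}

noncomputable def wcyc {V : Type*} (G : SimpleGraph V) : ℕ :=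
  sInf {t | ∃ φ, IsCyclicIntervalColoring G t φ}

noncomputable def Wint {V : Type*} (G : SimpleGraph V) : ℕ :=
  sSup {t | ∃ φ, IsIntervalColoring G t φ}

noncomputable def wint {V : Type*} (G : SimpleGraph V) : ℕ :=
  sInf {t | ∃ φ, IsIntervalColoring G t φ}

/-- Chromatic index: least `n` admitting a proper edge coloring with colors in `[1,n]`. -/
noncomputable def chromIndex {V : Type*} (G : SimpleGraph V) : ℕ :=
  sInf {n | ∃ φ : Sym2 V → ℕ, (∀ e ∈ G.edgeSet, φ e ∈ Set.Icc 1 n) ∧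
    (∀ e₁ ∈ G.edgeSet, ∀ e₂ ∈ G.edgeSet, e₁ ≠ e₂ → (∃ x, x ∈ e₁ ∧ x ∈ e₂) → φ e₁ ≠ φ e₂)}


set_option linter.unusedSectionVars false
set_option linter.unusedVariables false

namespace Stmt15Aux

/-! ### Pure arithmetic lemmas about the cyclic color map `n ↦ (n-1) % t + 1`. -/

lemma mod_sub_of_lt {x t : ℕ} (h1 : t ≤ x) (h2 : x < 2 * t) : x % t = x - t := by
  rw [Nat.mod_eq_sub_mod h1, Nat.mod_eq_of_lt (by omega)]

lemma arith_mod_inj {t a d n₁ n₂ : ℕ} (ha : 1 ≤ a) (hdt : d ≤ t) (h1 : a ≤ n₁) (h2 : n₁ ≤ a + d - 1)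
    (h3 : a ≤ n₂) (h4 : n₂ ≤ a + d - 1) (hne : n₁ ≠ n₂) :
    (n₁ - 1) % t + 1 ≠ (n₂ - 1) % t + 1 := by
  wlog hlt : n₁ < n₂ generalizing n₁ n₂
  · exact (this h3 h4 h1 h2 (Ne.symm hne) (by omega)).symm
  intro h
  have hmod : (n₁ - 1) % t = (n₂ - 1) % t := by
    have := Nat.succ_injective h
    omega
  have hdvd : t ∣ (n₂ - 1) - (n₁ - 1) := (Nat.modEq_iff_dvd' (by omega)).mp hmod
  have hle : t ≤ (n₂ - 1) - (n₁ - 1) := Nat.le_of_dvd (by omega) hdvd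
  omega

lemma arith_image_eq {t a d : ℕ} (ha : 1 ≤ a) (hd : 1 ≤ d) (hdt : d ≤ t) :
    (fun n => (n - 1) % t + 1) '' Set.Icc a (a + d - 1) =
      {y | ((a - 1) % t + 1 ≤ y ∧ y ≤ t ∧ y ≤ (a - 1) % t + 1 + d - 1) ∨
        (1 ≤ y ∧ y + t ≤ (a - 1) % t + 1 + d - 1)} := by
  have ht : 1 ≤ t := le_trans hd hdt
  set A := (a - 1) % t + 1 with hA
  have hAt : A ≤ t := by
    have := Nat.mod_lt (a - 1) (show 0 < t by omega)
    omega
  have hA1 : A - 1 = (a - 1) % t := by omega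
  have hmodadd : ∀ s : ℕ, (a - 1 + s) % t = (A - 1 + s) % t := by
    intro s
    rw [hA1]
    exact Nat.ModEq.add_right s (Nat.mod_modEq (a - 1) t).symm
  have hAlt : A - 1 < t := by
    have := Nat.mod_lt (a - 1) (show 0 < t by omega)
    omega
  ext y
  simp only [Set.mem_image, Set.mem_Icc, Set.mem_setOf_eq]
  constructor
  · rintro ⟨n, ⟨hn1, hn2⟩, rfl⟩
    have hs : n - a ≤ d - 1 := by omega
    have hn : n - 1 = a - 1 + (n - a) := by omega
    set s := n - a with hsdef
    rw [hn, hmodadd s]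
    by_cases hcase : A - 1 + s < t
    · rw [Nat.mod_eq_of_lt hcase]
      left; omega
    · rw [mod_sub_of_lt (by omega) (by omega)]
      right; omega
  · rintro (⟨h1, h2, h3⟩ | ⟨h1, h2⟩)
    · refine ⟨a + (y - A), ⟨by omega, by omega⟩, ?_⟩
      have : a + (y - A) - 1 = a - 1 + (y - A) := by omega
      rw [this, hmodadd, Nat.mod_eq_of_lt (by omega)]
      omega
    · have hyB : y ≤ A - 1 := by omega
      refine ⟨a + (y + t - A), ⟨by omega, by omega⟩, ?_⟩
      have : a + (y + t - A) - 1 = a - 1 + (y + t - A) := by omega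
      rw [this, hmodadd, mod_sub_of_lt (by omega) (by omega)]
      omega

lemma arith_cyc {t a d : ℕ} (ha : 1 ≤ a) (hd : 1 ≤ d) (hdt : d ≤ t) :
    IsCyclicInterval t ((fun n => (n - 1) % t + 1) '' Set.Icc a (a + d - 1)) := by
  have ht : 1 ≤ t := le_trans hd hdt
  set A := (a - 1) % t + 1 with hA
  have hAt : A ≤ t := by
    have := Nat.mod_lt (a - 1) (show 0 < t by omega)
    omega
  have hA1 : 1 ≤ A := by omega
  rw [arith_image_eq ha hd hdt]
  by_cases hcase : A + d - 1 ≤ t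
  · refine ⟨A, Set.mem_Icc.2 ⟨hA1, hAt⟩, A + d - 1, Set.mem_Icc.2 ⟨by omega, by omega⟩, Or.inl ?_⟩
    have h1 : min A (A + d - 1) = A := by omega
    have h2 : max A (A + d - 1) = A + d - 1 := by omega
    rw [h1, h2]
    ext y
    simp only [Set.mem_setOf_eq, Set.mem_Icc]
    omega
  · set B := A + d - 1 - t with hB
    have hB1 : 1 ≤ B := by omega
    have hBA : B < A := by omega
    refine ⟨A, Set.mem_Icc.2 ⟨hA1, hAt⟩, B, Set.mem_Icc.2 ⟨hB1, by omega⟩, Or.inr ?_⟩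
    have h1 : min A B = B := by omega
    have h2 : max A B = A := by omega
    rw [h1, h2]
    ext y
    simp only [Set.mem_setOf_eq, Set.mem_diff, Set.mem_Icc, Set.mem_insert_iff,
      Set.mem_singleton_iff]
    omega


/-! ### The rooted-tree coloring construction. -/

section Construction

variable {V : Type*} [Fintype V] [DecidableEq V] (H : SimpleGraph V) [DecidableRel H.Adj]
  (u : V) (q : ∀ x : V, H.Path x u) (spec : V → Option V) (t : ℕ)

/-- Parent of a vertex in the tree rooted at `u`. -/
def par (x : V) : V := (q x).1.getVert 1

/-- Children of a vertex. -/
def kids (y : V) : Finset V := (H.neighborFinset y).filter (fun c => par H u q c = y)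

/-- The permutation of child slots putting the distinguished child last. -/
noncomputable def perm (y : V) : Equiv.Perm (Fin (kids H u q y).card) :=
  match spec y with
  | some z =>
    if hz : z ∈ kids H u q y then
      Equiv.swap ((kids H u q y).equivFin ⟨z, hz⟩)
        ⟨(kids H u q y).card - 1, Nat.sub_lt (Finset.card_pos.2 ⟨z, hz⟩) Nat.one_pos⟩
    else Equiv.refl _
  | none => Equiv.refl _

/-- Slot of a child among its siblings. -/
noncomputable def swr (y c : V) : ℕ :=
  if hc : c ∈ kids H u q y then
    ((perm H u q spec y) ((kids H u q y).equivFin ⟨c, hc⟩)).val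
  else 0

/-- Rank of a child edge relative to the parent edge. -/
noncomputable def rnk (y c : V) : ℕ := (if y = u then 0 else 1) + swr H u q spec y c

/-- Absolute index of the parent edge of `x` (equal to `1` for the root). -/
noncomputable def ind (x : V) : ℕ :=
  1 + ((q x).1.darts.map (fun d => rnk H u q spec d.toProd.2 d.toProd.1)).sum

/-- The color of the parent edge of `x`. -/
noncomputable def colv (x : V) : ℕ := (ind H u q spec x - 1) % t + 1

/-- The edge coloring. -/
noncomputable def phi : Sym2 V → ℕ :=
  Sym2.lift ⟨fun a b => max (if par H u q a = b then colv H u q spec t a else 0)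
      (if par H u q b = a then colv H u q spec t b else 0),
    fun a b => max_comm _ _⟩

variable {H u q spec t}
variable (hq : ∀ (x : V) (w : H.Walk x u), w.IsPath → w = (q x).1)

section Basic
include hq

lemma q_nil : (q u).1 = SimpleGraph.Walk.nil := (hq u SimpleGraph.Walk.nil Walk.IsPath.nil).symm

lemma par_u : par H u q u = u := by rw [par, q_nil hq]; rfl

lemma ind_u : ind H u q spec u = 1 := by rw [ind, q_nil hq]; rfl

lemma q_cons {x : V} (hx : x ≠ u) :
    ∃ h : H.Adj x (par H u q x), (q x).1 = Walk.cons h (q (par H u q x)).1 := by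
  obtain ⟨w, hadj, p', hp'⟩ := Walk.exists_eq_cons_of_ne hx (q x).1
  have hpath := (q x).2
  rw [hp'] at hpath
  rw [Walk.cons_isPath_iff] at hpath
  have hw : par H u q x = w := by
    rw [par, hp', Walk.getVert_cons_succ, Walk.getVert_zero]
  rw [hw]
  exact ⟨hadj, by rw [hp', hq w p' hpath.1]⟩

lemma adj_par {x : V} (hx : x ≠ u) : H.Adj x (par H u q x) := (q_cons hq hx).1

lemma length_q {x : V} (hx : x ≠ u) :
    (q x).1.length = (q (par H u q x)).1.length + 1 := by
  obtain ⟨h, hc⟩ := q_cons hq hx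
  rw [hc, Walk.length_cons]

lemma nopair {x y : V} (hxy : x ≠ y) (h1 : par H u q x = y) (h2 : par H u q y = x) : False := by
  have hxu : x ≠ u := by
    rintro rfl
    rw [par_u hq] at h1
    exact hxy h1
  have hyu : y ≠ u := by
    rintro rfl
    rw [par_u hq] at h2
    exact hxy h2.symm
  have l1 := length_q hq hxu
  have l2 := length_q hq hyu
  rw [h1] at l1
  rw [h2] at l2
  omega

end Basic

lemma dich (hac : H.IsAcyclic) (hq : ∀ (x : V) (w : H.Walk x u), w.IsPath → w = (q x).1)
    {x y : V} (h : H.Adj x y) : par H u q x = y ∨ par H u q y = x := by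
  by_cases hx : x ∈ (q y).1.support
  · right
    have htu : ((q y).1.takeUntil x hx).IsPath := (q y).2.takeUntil hx
    have hone : ((q y).1.takeUntil x hx) = Walk.cons h.symm Walk.nil := by
      have := hac.path_unique ⟨(q y).1.takeUntil x hx, htu⟩
        ⟨Walk.cons h.symm Walk.nil, by simp [Walk.isPath_def, h.ne']⟩
      exact congrArg Subtype.val this
    have hspec := (q y).1.take_spec hx
    rw [hone] at hspec
    rw [par, ← hspec, Walk.cons_append, Walk.getVert_cons_succ, Walk.nil_append,
      Walk.getVert_zero]
  · left
    have : (Walk.cons h (q y).1).IsPath := by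
      rw [Walk.cons_isPath_iff]
      exact ⟨(q y).2, hx⟩
    have heq := hq x _ this
    rw [par, ← heq, Walk.getVert_cons_succ, Walk.getVert_zero]

end Construction

section Facts

variable {V : Type*} [Fintype V] [DecidableEq V] {H : SimpleGraph V} [DecidableRel H.Adj]
  {u : V} {q : ∀ x : V, H.Path x u} {spec : V → Option V} {t : ℕ}

lemma mem_kids {y c : V} : c ∈ kids H u q y ↔ H.Adj y c ∧ par H u q c = y := by
  rw [kids, Finset.mem_filter, SimpleGraph.mem_neighborFinset]

lemma kids_ne_u (hq : ∀ (x : V) (w : H.Walk x u), w.IsPath → w = (q x).1)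
    {y c : V} (hc : c ∈ kids H u q y) : c ≠ u := by
  rintro rfl
  obtain ⟨hadj, hpar⟩ := mem_kids.mp hc
  rw [par_u hq] at hpar
  subst hpar
  exact H.irrefl hadj

lemma kids_ne_self {y c : V} (hc : c ∈ kids H u q y) : c ≠ y :=
  ((mem_kids.mp hc).1.ne')

lemma kids_u (hac : H.IsAcyclic) (hq : ∀ (x : V) (w : H.Walk x u), w.IsPath → w = (q x).1) :
    kids H u q u = H.neighborFinset u := by
  ext c
  rw [mem_kids, SimpleGraph.mem_neighborFinset]
  refine ⟨fun h => h.1, fun h => ⟨h, ?_⟩⟩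
  rcases dich hac hq h with h' | h'
  · rw [par_u hq] at h'
    exact absurd h'.symm h.ne'
  · exact h'

lemma kids_ne_root (hac : H.IsAcyclic) (hq : ∀ (x : V) (w : H.Walk x u), w.IsPath → w = (q x).1)
    {y : V} (hy : y ≠ u) :
    kids H u q y = (H.neighborFinset y).erase (par H u q y) := by
  ext c
  rw [mem_kids, Finset.mem_erase, SimpleGraph.mem_neighborFinset]
  constructor
  · rintro ⟨hadj, hpar⟩
    refine ⟨fun hc => ?_, hadj⟩
    exact nopair hq hadj.ne' hpar (hc ▸ rfl)
  · rintro ⟨hne, hadj⟩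
    rcases dich hac hq hadj with h' | h'
    · exact absurd h'.symm hne
    · exact ⟨hadj, h'⟩

lemma card_kids_root (hac : H.IsAcyclic)
    (hq : ∀ (x : V) (w : H.Walk x u), w.IsPath → w = (q x).1) :
    (kids H u q u).card = H.degree u := by
  rw [kids_u hac hq, SimpleGraph.card_neighborFinset_eq_degree]

lemma card_kids (hac : H.IsAcyclic) (hq : ∀ (x : V) (w : H.Walk x u), w.IsPath → w = (q x).1)
    {y : V} (hy : y ≠ u) : (kids H u q y).card = H.degree y - 1 := by
  rw [kids_ne_root hac hq hy, Finset.card_erase_of_mem, SimpleGraph.card_neighborFinset_eq_degree]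
  rw [SimpleGraph.mem_neighborFinset]
  exact adj_par hq hy

lemma degree_pos_of_ne_root (hq : ∀ (x : V) (w : H.Walk x u), w.IsPath → w = (q x).1)
    {y : V} (hy : y ≠ u) : 1 ≤ H.degree y := by
  rw [← SimpleGraph.card_neighborFinset_eq_degree]
  exact Finset.card_pos.2 ⟨par H u q y, (SimpleGraph.mem_neighborFinset _ _ _).2 (adj_par hq hy)⟩

lemma swr_lt {y c : V} (hc : c ∈ kids H u q y) : swr H u q spec y c < (kids H u q y).card := by
  rw [swr, dif_pos hc]
  exact Fin.isLt _

lemma swr_inj {y c₁ c₂ : V} (h1 : c₁ ∈ kids H u q y) (h2 : c₂ ∈ kids H u q y)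
    (h : swr H u q spec y c₁ = swr H u q spec y c₂) : c₁ = c₂ := by
  simp only [swr, dif_pos h1, dif_pos h2] at h
  have := (kids H u q y).equivFin.injective ((perm H u q spec y).injective (Fin.ext h))
  exact congrArg Subtype.val this

lemma swr_surj {y : V} {j : ℕ} (hj : j < (kids H u q y).card) :
    ∃ c ∈ kids H u q y, swr H u q spec y c = j := by
  set c := ((kids H u q y).equivFin.symm ((perm H u q spec y).symm ⟨j, hj⟩))
  refine ⟨c.1, c.2, ?_⟩
  rw [swr, dif_pos c.2]
  simp [c]

lemma swr_spec {y z : V} (hspec : spec y = some z) (hz : z ∈ kids H u q y) :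
    swr H u q spec y z = (kids H u q y).card - 1 := by
  simp only [swr, dif_pos hz, perm, hspec]
  rw [Equiv.swap_apply_left]

lemma ind_eq (hq : ∀ (x : V) (w : H.Walk x u), w.IsPath → w = (q x).1) {x : V} (hx : x ≠ u) :
    ind H u q spec x = ind H u q spec (par H u q x) + rnk H u q spec (par H u q x) x := by
  obtain ⟨h, hc⟩ := q_cons hq hx
  rw [ind, hc, Walk.darts_cons, List.map_cons, List.sum_cons, ind]
  dsimp only
  omega

lemma ind_kid (hq : ∀ (x : V) (w : H.Walk x u), w.IsPath → w = (q x).1) {y c : V}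
    (hc : c ∈ kids H u q y) :
    ind H u q spec c = ind H u q spec y + rnk H u q spec y c := by
  obtain ⟨hadj, hpar⟩ := mem_kids.mp hc
  have := ind_eq (spec := spec) hq (kids_ne_u hq hc)
  rwa [hpar] at this

lemma ind_pos (x : V) : 1 ≤ ind H u q spec x := by rw [ind]; omega

lemma ind_kid_exact (hac : H.IsAcyclic) (hq : ∀ (x : V) (w : H.Walk x u), w.IsPath → w = (q x).1)
    {y c : V} (hc : c ∈ kids H u q y) (hspec : spec y = some c) :
    ind H u q spec c = ind H u q spec y + (H.degree y - 1) := by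
  rw [ind_kid hq hc, rnk, swr_spec hspec hc]
  by_cases hy : y = u
  · subst hy
    rw [card_kids_root hac hq]
    simp
  · rw [card_kids hac hq hy, if_neg hy]
    have h1 : 1 ≤ (kids H u q y).card := Finset.card_pos.2 ⟨c, hc⟩
    rw [card_kids hac hq hy] at h1
    omega


lemma edge_rep {e : Sym2 V} (he : e ∈ H.edgeSet) : ∃ a b, H.Adj a b ∧ e = s(a, b) := by
  revert he
  induction e using Sym2.ind with
  | _ a b => exact fun he => ⟨a, b, (SimpleGraph.mem_edgeSet H).mp he, rfl⟩

lemma colv_mem (ht : 1 ≤ t) (x : V) : colv H u q spec t x ∈ Set.Icc 1 t := by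
  rw [colv, Set.mem_Icc]
  have := Nat.mod_lt (ind H u q spec x - 1) (show 0 < t by omega)
  omega

lemma phi_eq (hq : ∀ (x : V) (w : H.Walk x u), w.IsPath → w = (q x).1) {c y : V}
    (hpar : par H u q c = y) (hadj : H.Adj y c) :
    phi H u q spec t s(c, y) = colv H u q spec t c := by
  rw [phi, Sym2.lift_mk]
  dsimp only
  rw [if_pos hpar, if_neg (fun h => nopair hq hadj.ne' hpar h)]
  exact max_eq_left (Nat.zero_le _)

lemma phi_edge (hac : H.IsAcyclic) (hq : ∀ (x : V) (w : H.Walk x u), w.IsPath → w = (q x).1)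
    {e : Sym2 V} (he : e ∈ H.edgeSet) :
    ∃ c, c ≠ u ∧ phi H u q spec t e = colv H u q spec t c := by
  obtain ⟨a, b, hadj, rfl⟩ := edge_rep he
  have hne_of_par : ∀ z w : V, par H u q z = w → H.Adj z w → z ≠ u := by
    intro z w hp ha hzu
    subst hzu
    rw [par_u hq] at hp
    exact ha.ne hp
  rcases dich hac hq hadj with h' | h'
  · exact ⟨a, hne_of_par a b h' hadj, phi_eq hq h' hadj.symm⟩
  · exact ⟨b, hne_of_par b a h' hadj.symm, by
      rw [Sym2.eq_swap]
      exact phi_eq hq h' hadj⟩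

lemma phi_incid (hac : H.IsAcyclic) (hq : ∀ (x : V) (w : H.Walk x u), w.IsPath → w = (q x).1)
    {x : V} {e : Sym2 V} (he : e ∈ H.incidenceSet x) :
    ∃ c, phi H u q spec t e = colv H u q spec t c ∧
      ((c = x ∧ x ≠ u ∧ e = s(x, par H u q x)) ∨ (c ∈ kids H u q x ∧ e = s(c, x))) := by
  obtain ⟨he1, he2⟩ := he
  obtain ⟨a, b, hadj, rfl⟩ := edge_rep he1
  have key : ∀ a b : V, H.Adj a b → x = a →
      ∃ c, phi H u q spec t s(a, b) = colv H u q spec t c ∧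
      ((c = x ∧ x ≠ u ∧ s(a, b) = s(x, par H u q x)) ∨ (c ∈ kids H u q x ∧ s(a, b) = s(c, x))) := by
    intro a b hadj hxa
    subst hxa
    rcases dich hac hq hadj with h' | h'
    · refine ⟨x, phi_eq hq h' hadj.symm, Or.inl ⟨rfl, ?_, by rw [h']⟩⟩
      rintro rfl
      rw [par_u hq] at h'
      exact hadj.ne h'
    · refine ⟨b, ?_, Or.inr ⟨mem_kids.2 ⟨hadj, h'⟩, Sym2.eq_swap⟩⟩
      rw [Sym2.eq_swap]
      exact phi_eq hq h' hadj
  rw [Sym2.mem_iff] at he2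
  rcases he2 with rfl | rfl
  · exact key _ _ hadj rfl
  · have := key _ _ hadj.symm rfl
    rwa [Sym2.eq_swap] at this

lemma ends_mem_block (hac : H.IsAcyclic) (hq : ∀ (x : V) (w : H.Walk x u), w.IsPath → w = (q x).1)
    {x c : V} (h : (c = x ∧ x ≠ u) ∨ c ∈ kids H u q x) :
    ind H u q spec x ≤ ind H u q spec c ∧
      ind H u q spec c ≤ ind H u q spec x + H.degree x - 1 := by
  rcases h with ⟨rfl, hxu⟩ | hc
  · have := degree_pos_of_ne_root hq hxu
    omega
  · have hrec := ind_kid (spec := spec) hq hc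
    have hlt := swr_lt (spec := spec) hc
    by_cases hx : x = u
    · have hcard : (kids H u q x).card = H.degree x := by
        rw [hx]; exact card_kids_root hac hq
      rw [hrec, rnk, if_pos hx]
      omega
    · rw [card_kids hac hq hx] at hlt
      have hdeg := degree_pos_of_ne_root hq hx
      rw [hrec, rnk, if_neg hx]
      omega

lemma ends_surj (hac : H.IsAcyclic) (hq : ∀ (x : V) (w : H.Walk x u), w.IsPath → w = (q x).1)
    {x : V} {j : ℕ} (hdeg : 1 ≤ H.degree x) (h1 : ind H u q spec x ≤ j)
    (h2 : j ≤ ind H u q spec x + H.degree x - 1) :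
    ∃ c, ((c = x ∧ x ≠ u) ∨ c ∈ kids H u q x) ∧ ind H u q spec c = j := by
  by_cases hx : x = u
  · have hiu : ind H u q spec x = 1 := by rw [hx]; exact ind_u hq
    have hcard : (kids H u q x).card = H.degree x := by
      rw [hx]; exact card_kids_root hac hq
    have hjlt : j - 1 < (kids H u q x).card := by omega
    obtain ⟨c, hc, hswr⟩ := swr_surj (spec := spec) hjlt
    refine ⟨c, Or.inr hc, ?_⟩
    rw [ind_kid hq hc, rnk, if_pos hx, hswr, hiu]
    omega
  · by_cases hj : j = ind H u q spec x
    · exact ⟨x, Or.inl ⟨rfl, hx⟩, hj.symm⟩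
    · have hjlt : j - ind H u q spec x - 1 < (kids H u q x).card := by
        rw [card_kids hac hq hx]; omega
      obtain ⟨c, hc, hswr⟩ := swr_surj (spec := spec) hjlt
      refine ⟨c, Or.inr hc, ?_⟩
      rw [ind_kid hq hc, rnk, if_neg hx, hswr]
      omega

lemma ends_inj (hac : H.IsAcyclic) (hq : ∀ (x : V) (w : H.Walk x u), w.IsPath → w = (q x).1)
    {x c₁ c₂ : V} (h₁ : (c₁ = x ∧ x ≠ u) ∨ c₁ ∈ kids H u q x)
    (h₂ : (c₂ = x ∧ x ≠ u) ∨ c₂ ∈ kids H u q x) (hne : c₁ ≠ c₂) :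
    ind H u q spec c₁ ≠ ind H u q spec c₂ := by
  have hkid_gt : ∀ c, c ∈ kids H u q x → x ≠ u →
      ind H u q spec x < ind H u q spec c := by
    intro c hc hxu
    rw [ind_kid hq hc, rnk, if_neg hxu]
    omega
  rcases h₁ with ⟨rfl, hxu⟩ | hc₁
  · rcases h₂ with ⟨rfl, _⟩ | hc₂
    · exact absurd rfl hne
    · exact (hkid_gt _ hc₂ hxu).ne
  · rcases h₂ with ⟨rfl, hxu⟩ | hc₂
    · exact (hkid_gt _ hc₁ hxu).ne'
    · intro h
      rw [ind_kid hq hc₁, ind_kid hq hc₂, rnk, rnk] at h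
      exact hne (swr_inj (spec := spec) hc₁ hc₂ (by omega))

lemma phi_image (hac : H.IsAcyclic) (hq : ∀ (x : V) (w : H.Walk x u), w.IsPath → w = (q x).1)
    (ht : 1 ≤ t) {x : V} (hdeg : 1 ≤ H.degree x) :
    phi H u q spec t '' H.incidenceSet x =
      (fun n => (n - 1) % t + 1) ''
        Set.Icc (ind H u q spec x) (ind H u q spec x + H.degree x - 1) := by
  ext y
  constructor
  · rintro ⟨e, he, rfl⟩
    obtain ⟨c, hphi, hcase⟩ := phi_incid hac hq he
    have hcase' : (c = x ∧ x ≠ u) ∨ c ∈ kids H u q x := by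
      rcases hcase with ⟨hc1, hc2, _⟩ | ⟨hc1, _⟩
      · exact Or.inl ⟨hc1, hc2⟩
      · exact Or.inr hc1
    have hblk := ends_mem_block (spec := spec) hac hq hcase'
    exact ⟨ind H u q spec c, Set.mem_Icc.2 hblk, hphi.symm⟩
  · rintro ⟨j, hj, rfl⟩
    rw [Set.mem_Icc] at hj
    obtain ⟨c, hc, rfl⟩ := ends_surj hac hq hdeg hj.1 hj.2
    rcases hc with ⟨rfl, hxu⟩ | hc
    · refine ⟨s(c, par H u q c), ?_, phi_eq hq rfl (adj_par hq hxu).symm⟩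
      exact (SimpleGraph.mem_incidenceSet _ _ _).2 (adj_par hq hxu)
    · obtain ⟨hadj, hpar⟩ := mem_kids.mp hc
      refine ⟨s(c, x), ?_, phi_eq hq hpar hadj⟩
      rw [Sym2.eq_swap]
      exact (SimpleGraph.mem_incidenceSet _ _ _).2 hadj


lemma ncard_incidence (x : V) : (H.incidenceSet x).ncard = H.degree x := by
  rw [← SimpleGraph.card_incidenceFinset_eq_degree, SimpleGraph.incidenceFinset,
    Set.ncard_eq_toFinset_card']

lemma darts_par (hac : H.IsAcyclic) (hq : ∀ (x : V) (w : H.Walk x u), w.IsPath → w = (q x).1) :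
    ∀ {a b : V} (w : H.Walk a b), w.IsPath → par H u q a ∉ w.support.tail →
      ∀ d ∈ w.darts, par H u q d.toProd.2 = d.toProd.1 := by
  intro a b w
  induction w with
  | nil => intro _ _ d hd; simp at hd
  | @cons a' c' b' hadj w ih =>
    intro hp hpar d hd
    rw [SimpleGraph.Walk.cons_isPath_iff] at hp
    rw [SimpleGraph.Walk.darts_cons, List.mem_cons] at hd
    rw [SimpleGraph.Walk.support_cons, List.tail_cons] at hpar
    rcases hd with rfl | hd
    · rcases dich hac hq hadj with h' | h'
      · exact absurd (h' ▸ SimpleGraph.Walk.start_mem_support w) hpar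
      · exact h'
    · refine ih hp.1 ?_ d hd
      rcases dich hac hq hadj with h' | h'
      · exact absurd (h' ▸ SimpleGraph.Walk.start_mem_support w) hpar
      · rw [h']
        intro hmem
        exact hp.2 (List.mem_of_mem_tail hmem)

lemma sweep (hac : H.IsAcyclic) (hq : ∀ (x : V) (w : H.Walk x u), w.IsPath → w = (q x).1)
    {a b : V} (w : H.Walk a b) :
    (∀ d ∈ w.darts, par H u q d.toProd.2 = d.toProd.1 ∧ spec d.toProd.1 = some d.toProd.2) →
    (∀ j, 1 ≤ j → j ≤ ind H u q spec a → ∃ x, x ≠ u ∧ ind H u q spec x = j) →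
    (ind H u q spec a + ((w.support.dropLast.map (fun y => H.degree y - 1)).sum)
        ≤ ind H u q spec b
      ∧ ∀ j, 1 ≤ j → j ≤ ind H u q spec b → ∃ x, x ≠ u ∧ ind H u q spec x = j) := by
  induction w with
  | nil =>
    intro _ hbase
    refine ⟨by simp, hbase⟩
  | @cons a' c' b' hadj w ih =>
    intro hd hbase
    have hd0 := hd _ (by rw [SimpleGraph.Walk.darts_cons]; exact List.mem_cons_self)
    have hck : c' ∈ kids H u q a' := mem_kids.2 ⟨hadj, hd0.1⟩
    have hindc : ind H u q spec c' = ind H u q spec a' + (H.degree a' - 1) :=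
      ind_kid_exact hac hq hck hd0.2
    have hdeg : 1 ≤ H.degree a' := by
      rw [← SimpleGraph.card_neighborFinset_eq_degree]
      exact Finset.card_pos.2 ⟨c', (SimpleGraph.mem_neighborFinset _ _ _).2 hadj⟩
    have hcov : ∀ j, 1 ≤ j → j ≤ ind H u q spec c' → ∃ x, x ≠ u ∧ ind H u q spec x = j := by
      intro j hj1 hj2
      by_cases hja : j ≤ ind H u q spec a'
      · exact hbase j hj1 hja
      · obtain ⟨c, hc, hic⟩ := ends_surj (spec := spec) (j := j) hac hq hdeg (by omega) (by omega)
        rcases hc with ⟨rfl, hau⟩ | hc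
        · exact absurd hic.symm (by omega)
        · exact ⟨c, kids_ne_u hq hc, hic⟩
    obtain ⟨hle, hcov'⟩ := ih
      (fun d hd' => hd _ (by rw [SimpleGraph.Walk.darts_cons]; exact List.mem_cons_of_mem _ hd'))
      hcov
    refine ⟨?_, hcov'⟩
    rw [SimpleGraph.Walk.support_cons,
      List.dropLast_cons_of_ne_nil (SimpleGraph.Walk.support_ne_nil w), List.map_cons,
      List.sum_cons]
    omega

lemma chainBound :
    ∀ (l : List V), l ≠ [] → l.Chain' H.Adj →
      (⋃ y ∈ {z | z ∈ l}, H.incidenceSet y).ncard + l.length ≤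
        ((l.map (fun y => H.degree y)).sum) + 1 := by
  intro l
  induction l with
  | nil => intro h; exact absurd rfl h
  | cons a l ih =>
    intro _ hch
    rcases l with _ | ⟨b, l'⟩
    · simp [ncard_incidence]
    · have hsplit : (⋃ y ∈ {z | z ∈ a :: b :: l'}, H.incidenceSet y)
          = H.incidenceSet a ∪ ⋃ y ∈ {z | z ∈ b :: l'}, H.incidenceSet y := by
        have : {z | z ∈ a :: b :: l'} = insert a {z | z ∈ b :: l'} := by
          ext z; simp [List.mem_cons]
        rw [this, Set.biUnion_insert]
      simp only [List.Chain', List.isChain_cons_cons] at hch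
      have hab := hch.1
      have hsum := Set.ncard_union_add_ncard_inter (H.incidenceSet a)
        (⋃ y ∈ {z | z ∈ b :: l'}, H.incidenceSet y) (Set.toFinite _) (Set.toFinite _)
      have hinter : 1 ≤ (H.incidenceSet a ∩ ⋃ y ∈ {z | z ∈ b :: l'}, H.incidenceSet y).ncard := by
        rw [Nat.one_le_iff_ne_zero, ← Nat.pos_iff_ne_zero, Set.ncard_pos (Set.toFinite _)]
        refine ⟨s(a, b), (H.mem_incidenceSet a b).2 hab, ?_⟩
        refine Set.mem_biUnion (show b ∈ {z | z ∈ b :: l'} from List.mem_cons_self) ?_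
        rw [Sym2.eq_swap]
        exact (H.mem_incidenceSet b a).2 hab.symm
      have hIH := ih (List.cons_ne_nil _ _) hch.2
      have hcard : (H.incidenceSet a).ncard = H.degree a := ncard_incidence a
      rw [hsplit]
      rw [List.length_cons, List.map_cons, List.sum_cons]
      omega

lemma sum_deg_sub (l : List V) :
    (l.map (fun y => H.degree y)).sum ≤ (l.map (fun y => H.degree y - 1)).sum + l.length := by
  induction l with
  | nil => simp
  | cons a l ih =>
    rw [List.map_cons, List.map_cons, List.sum_cons, List.sum_cons, List.length_cons]
    omega


lemma spec_dart {a b : V} (p : H.Walk a b) (hp : p.IsPath) {d : H.Dart} (hd : d ∈ p.darts) :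
    (p.darts.find? (fun d' => d'.toProd.1 = d.toProd.1)).map (fun d' => d'.toProd.2)
      = some d.toProd.2 := by
  have hfst : (p.darts.map (fun d' : H.Dart => d'.toProd.1)).Nodup := by
    rw [SimpleGraph.Walk.map_fst_darts]
    exact (List.dropLast_sublist _).nodup hp.support_nodup
  have hsome : (p.darts.find? (fun d' => d'.toProd.1 = d.toProd.1)).isSome := by
    rw [List.find?_isSome]
    exact ⟨d, hd, by simp⟩
  obtain ⟨d', hd'⟩ := Option.isSome_iff_exists.mp hsome
  have hmem := List.mem_of_find?_eq_some hd'
  have heq : d'.toProd.1 = d.toProd.1 := by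
    have := List.find?_some hd'
    simpa using this
  have : d' = d := List.inj_on_of_nodup_map hfst hmem hd heq
  rw [hd', this]
  rfl

end Facts

end Stmt15Aux

open Stmt15Aux

/-- Every tree `H` with an edge admits a cyclically-interval `t`-coloring for each
`t ∈ [Δ(H), M(H)]`. -/
theorem stmt15 {V : Type*} [Fintype V] [DecidableEq V] (H : SimpleGraph V) [DecidableRel H.Adj]
    (hH : H.IsTree) (hE : H.edgeSet.Nonempty) (t : ℕ)
    (h1 : H.maxDegree ≤ t) (h2 : t ≤ treeM H) :
    ∃ φ, IsCyclicIntervalColoring H t φ := by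
  classical
  have hconn := hH.isConnected
  have hac := hH.IsAcyclic
  obtain ⟨e₀, he₀⟩ := hE
  obtain ⟨a₀, b₀, hab₀, he₀eq⟩ := edge_rep he₀
  have hdeg₀ : 1 ≤ H.degree a₀ := by
    rw [← SimpleGraph.card_neighborFinset_eq_degree]
    exact Finset.card_pos.2 ⟨b₀, (SimpleGraph.mem_neighborFinset _ _ _).2 hab₀⟩
  have ht1 : 1 ≤ t := le_trans (le_trans hdeg₀ (H.degree_le_maxDegree a₀)) h1
  -- the maximum `treeM H` is attained
  have hbdd : BddAbove {n | ∃ (u v : V) (p : H.Walk u v), p.IsPath ∧ (pathTP H p).ncard = n} := by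
    refine ⟨Fintype.card (Sym2 V), fun n hn => ?_⟩
    obtain ⟨u, v, p, hp, rfl⟩ := hn
    have := Set.ncard_le_ncard (Set.subset_univ (pathTP H p)) Set.finite_univ
    rwa [Set.ncard_univ, Nat.card_eq_fintype_card] at this
  have hne : {n | ∃ (u v : V) (p : H.Walk u v), p.IsPath ∧ (pathTP H p).ncard = n}.Nonempty := by
    refine ⟨0, a₀, a₀, SimpleGraph.Walk.nil, SimpleGraph.Walk.IsPath.nil, ?_⟩
    rw [pathTP, if_pos (by simp)]
    simp
  obtain ⟨u, v, p, hp, hM⟩ := Nat.sSup_mem hne hbdd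
  -- root the tree at u
  set q : ∀ x : V, H.Path x u := fun x => ((hconn.preconnected x u).some.toPath) with hqdef
  have hq : ∀ (x : V) (w : H.Walk x u), w.IsPath → w = (q x).1 :=
    fun x w hw => congrArg Subtype.val (hac.path_unique ⟨w, hw⟩ (q x))
  set spec : V → Option V :=
    fun y => (p.darts.find? (fun d => d.toProd.1 = y)).map (fun d => d.toProd.2) with hspecdef
  have hdegt : ∀ x : V, H.degree x ≤ t := fun x => le_trans (H.degree_le_maxDegree x) h1
  refine ⟨phi H u q spec t, ⟨?_, ?_, ?_⟩, ?_⟩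
  · -- colors in range
    intro e he
    obtain ⟨c, hcu, hphi⟩ := phi_edge (spec := spec) (t := t) hac hq he
    rw [hphi]
    exact colv_mem ht1 c
  · -- properness
    rintro e₁ he₁ e₂ he₂ hne12 ⟨x, hx1, hx2⟩
    have hi₁ : e₁ ∈ H.incidenceSet x := ⟨he₁, hx1⟩
    have hi₂ : e₂ ∈ H.incidenceSet x := ⟨he₂, hx2⟩
    obtain ⟨c₁, hphi₁, hc₁⟩ := phi_incid (spec := spec) (t := t) hac hq hi₁
    obtain ⟨c₂, hphi₂, hc₂⟩ := phi_incid (spec := spec) (t := t) hac hq hi₂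
    have hcc : c₁ ≠ c₂ := by
      rintro rfl
      rcases hc₁ with ⟨hcx₁, _, he₁'⟩ | ⟨hk₁, he₁'⟩ <;>
        rcases hc₂ with ⟨hcx₂, _, he₂'⟩ | ⟨hk₂, he₂'⟩
      · exact hne12 (he₁'.trans he₂'.symm)
      · exact kids_ne_self hk₂ hcx₁
      · exact kids_ne_self hk₁ hcx₂
      · exact hne12 (he₁'.trans he₂'.symm)
    have hd₁ : (c₁ = x ∧ x ≠ u) ∨ c₁ ∈ kids H u q x := by
      rcases hc₁ with ⟨ha, hb, _⟩ | ⟨ha, _⟩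
      · exact Or.inl ⟨ha, hb⟩
      · exact Or.inr ha
    have hd₂ : (c₂ = x ∧ x ≠ u) ∨ c₂ ∈ kids H u q x := by
      rcases hc₂ with ⟨ha, hb, _⟩ | ⟨ha, _⟩
      · exact Or.inl ⟨ha, hb⟩
      · exact Or.inr ha
    have hind : ind H u q spec c₁ ≠ ind H u q spec c₂ := ends_inj hac hq hd₁ hd₂ hcc
    have hb₁ := ends_mem_block (spec := spec) hac hq hd₁
    have hb₂ := ends_mem_block (spec := spec) hac hq hd₂
    rw [hphi₁, hphi₂]
    exact arith_mod_inj (ind_pos x) (hdegt x) hb₁.1 hb₁.2 hb₂.1 hb₂.2 hind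
  · -- all colors used
    intro c hc
    rw [Set.mem_Icc] at hc
    by_cases htt : t = 1
    · obtain ⟨c', hcu', hphi'⟩ := phi_edge (spec := spec) (t := t) hac hq he₀
      refine ⟨e₀, he₀, ?_⟩
      rw [hphi', colv, htt]
      omega
    · -- here 2 ≤ t, so the chosen path has length ≥ 2
      have ht2 : 2 ≤ t := by omega
      have hMM : t ≤ (pathTP H p).ncard := by rw [hM]; exact h2
      have hlen : 2 ≤ p.length := by
        by_contra hcon
        have hple : p.length ≤ 1 := by omega
        have : (pathTP H p).ncard ≤ 1 := by
          rw [pathTP, if_pos hple]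
          have hsub : {e | e ∈ p.edges} = ↑p.edges.toFinset := by
            ext e; simp
          rw [hsub, Set.ncard_coe_finset]
          calc p.edges.toFinset.card ≤ p.edges.length := List.toFinset_card_le _
            _ = p.length := p.length_edges
            _ ≤ 1 := hple
        omega
      have huv : u ≠ v := by
        rintro rfl
        have hlp : p.length = ((⟨p, hp⟩ : H.Path u u) : H.Walk u u).length := rfl
        rw [hac.path_unique ⟨p, hp⟩ SimpleGraph.Path.nil] at hlp
        simp only [SimpleGraph.Path.nil] at hlp
        rw [SimpleGraph.Walk.length_nil] at hlp
        omega
      -- dart facts for the sweep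
      have hdartpar : ∀ d ∈ p.darts, par H u q d.toProd.2 = d.toProd.1 := by
        refine darts_par hac hq p hp ?_
        rw [par_u hq]
        have := hp.support_nodup
        rw [SimpleGraph.Walk.support_eq_cons] at this
        exact (List.nodup_cons.mp this).1
      have hdartspec : ∀ d ∈ p.darts, spec d.toProd.1 = some d.toProd.2 :=
        fun d hd => spec_dart p hp hd
      have hdegu : 1 ≤ H.degree u := by
        obtain ⟨w, hw, _, _⟩ := SimpleGraph.Walk.exists_eq_cons_of_ne huv p
        rw [← SimpleGraph.card_neighborFinset_eq_degree]
        exact Finset.card_pos.2 ⟨w, (SimpleGraph.mem_neighborFinset _ _ _).2 hw⟩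
      have hbase : ∀ j, 1 ≤ j → j ≤ ind H u q spec u → ∃ x, x ≠ u ∧ ind H u q spec x = j := by
        intro j hj1 hj2
        rw [ind_u hq] at hj2
        have hj : j = 1 := by omega
        obtain ⟨c', hc', hic'⟩ := ends_surj (spec := spec) (j := 1) (x := u) hac hq hdegu
          (by rw [ind_u hq]) (by rw [ind_u hq]; omega)
        rcases hc' with ⟨_, hfalse⟩ | hc'
        · exact absurd rfl hfalse
        · exact ⟨c', kids_ne_u hq hc', by omega⟩
      obtain ⟨hle, hcov⟩ := sweep hac hq p (fun d hd => ⟨hdartpar d hd, hdartspec d hd⟩) hbase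
      -- the internal vertices of p
      set l := p.support.tail.dropLast with hldef
      have htail_ne : p.support.tail ≠ [] := by
        refine List.ne_nil_of_length_pos ?_
        rw [List.length_tail, SimpleGraph.Walk.length_support]
        omega
      have hlne : l ≠ [] := by
        refine List.ne_nil_of_length_pos ?_
        rw [hldef, List.length_dropLast, List.length_tail, SimpleGraph.Walk.length_support]
        omega
      have hchain : l.Chain' H.Adj :=
        (p.isChain_adj_support.tail).prefix (List.dropLast_prefix _)
      have hdl : p.support.dropLast = u :: l := by
        conv_lhs => rw [SimpleGraph.Walk.support_eq_cons]
        rw [List.dropLast_cons_of_ne_nil htail_ne]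
      have hsupp : p.support.dropLast ++ [v] = p.support := by
        rw [← SimpleGraph.Walk.map_fst_darts]
        exact SimpleGraph.Walk.map_fst_darts_append p
      have htl : l ++ [v] = p.support.tail := by
        have h3 := hsupp
        rw [hdl, SimpleGraph.Walk.support_eq_cons, List.cons_append] at h3
        exact (List.cons_eq_cons.mp h3).2
      have hnodup := hp.support_nodup
      rw [SimpleGraph.Walk.support_eq_cons, List.nodup_cons] at hnodup
      have hvl : v ∉ l := by
        intro hv
        have := hnodup.2
        rw [← htl] at this
        rcases List.nodup_append'.mp this with ⟨_, _, hdisj⟩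
        exact hdisj hv (List.mem_singleton_self v)
      have hul : u ∉ l := fun hu => hnodup.1 (htl ▸ List.mem_append_left [v] hu)
      have hTP : pathTP H p = ⋃ y ∈ {z | z ∈ l}, H.incidenceSet y := by
        rw [pathTP, if_neg (by omega)]
        have hAB : {w | w ∈ p.support ∧ w ≠ u ∧ w ≠ v} = {z | z ∈ l} := by
          ext w
          simp only [Set.mem_setOf_eq]
          constructor
          · rintro ⟨hws, hwu, hwv⟩
            rw [SimpleGraph.Walk.support_eq_cons, List.mem_cons] at hws
            rcases hws with rfl | hws
            · exact absurd rfl hwu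
            · rw [← htl, List.mem_append] at hws
              rcases hws with hws | hws
              · exact hws
              · exact absurd (List.mem_singleton.mp hws) hwv
          · intro hw
            refine ⟨?_, fun h => hul (h ▸ hw), fun h => hvl (h ▸ hw)⟩
            rw [SimpleGraph.Walk.support_eq_cons]
            exact List.mem_cons_of_mem u (htl ▸ List.mem_append_left [v] hw)
        rw [hAB]
      have hchainB := chainBound l hlne hchain
      have hsum := sum_deg_sub (H := H) l
      rw [hdl, List.map_cons, List.sum_cons, ind_u hq] at hle
      have hTPn : (pathTP H p).ncard = (⋃ y ∈ {z | z ∈ l}, H.incidenceSet y).ncard := by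
        rw [hTP]
      have hcle : c ≤ ind H u q spec v := by omega
      obtain ⟨x, hxu, hx⟩ := hcov c hc.1 hcle
      refine ⟨s(x, par H u q x), (SimpleGraph.mem_edgeSet H).2 (adj_par hq hxu), ?_⟩
      rw [phi_eq hq rfl (adj_par hq hxu).symm, colv, hx]
      have : (c - 1) % t = c - 1 := Nat.mod_eq_of_lt (by omega)
      omega
  · -- cyclic interval condition at each vertex
    intro x hx
    obtain ⟨e, he⟩ := hx
    have hdegx : 1 ≤ H.degree x := by
      obtain ⟨a, b, hab, habe⟩ := edge_rep he.1
      rw [← SimpleGraph.card_neighborFinset_eq_degree]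
      have hx2 := he.2
      rw [habe, Sym2.mem_iff] at hx2
      rcases hx2 with rfl | rfl
      · exact Finset.card_pos.2 ⟨b, (SimpleGraph.mem_neighborFinset _ _ _).2 hab⟩
      · exact Finset.card_pos.2 ⟨a, (SimpleGraph.mem_neighborFinset _ _ _).2 hab.symm⟩
    rw [phi_image hac hq ht1 hdegx]
    exact arith_cyc (ind_pos x) hdegx (hdegt x)
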